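/- Let g be a doubling weight function and let u be a harmonic function on the unit disk with Fourier coefficients (a_j)_{j∈ℤ} satisfying |u(z)| ≤ K·g(1/(1−|z|)) for all z in the unit disk. Then there exists a constant C (depending on u, g, K) such that for every integer n ≥ 1 and every trigonometric polynomial P(θ) = ∑_{|j|≤n} c_j e^{ijθ} with complex coefficients, sup_{θ∈[0,2π]} |∑_{|j|≤n} a_j c_j e^{ijθ}| ≤ C · ((1/2π)∫_0^{2π} |P(φ)| dφ) · g(n). -/

import Mathlib

open intervalIntegral Real MeasureTheory Finset


/-- A doubling weight function with doubling constant `D`: a positive, increasing,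
continuous function on `[1,∞)` with `g(1) = 1`, `g(x) → ∞`, and `g(2x) ≤ D·g(x)`. -/
def IsDoublingWeight (g : ℝ → ℝ) (D : ℝ) : Prop :=
  ContinuousOn g (Set.Ici 1) ∧ MonotoneOn g (Set.Ici 1) ∧
  (∀ x : ℝ, 1 ≤ x → 0 < g x) ∧ g 1 = 1 ∧
  Filter.Tendsto g Filter.atTop Filter.atTop ∧
  (∀ x : ℝ, 1 ≤ x → g (2 * x) ≤ D * g x)

/-- `u` is the harmonic function on the unit disk whose Fourier coefficients are `a`,
i.e. `u(r e^{iθ}) = ∑_{j ∈ ℤ} a_j r^{|j|} e^{ijθ}` with `a_{-j} = conj (a_j)`. -/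
def HasFourierExpansion (u : ℂ → ℝ) (a : ℤ → ℂ) : Prop :=
  (∀ j : ℤ, a (-j) = starRingEnd ℂ (a j)) ∧
  ∀ r θ : ℝ, 0 ≤ r → r < 1 →
    HasSum (fun j : ℤ => a j * (r : ℂ) ^ j.natAbs * Complex.exp (Complex.I * (j : ℂ) * (θ : ℂ)))
      ((u ((r : ℂ) * Complex.exp (Complex.I * (θ : ℂ))) : ℂ))

lemma orth (k : ℤ) : (∫ ψ in (0:ℝ)..(2*π), Complex.exp (Complex.I * k * ψ)) =
    if k = 0 then (2*π : ℂ) else 0 := by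
  rcases eq_or_ne k 0 with hk | hk
  · simp [hk]
  · rw [if_neg hk]
    have hc : (Complex.I * k : ℂ) ≠ 0 := by
      simp [Complex.I_ne_zero, Complex.ext_iff, hk]
    have : ∀ ψ : ℝ, Complex.I * k * (ψ:ℂ) = (Complex.I * k) * ψ := fun ψ => by ring
    rw [show (fun ψ : ℝ => Complex.exp (Complex.I * k * ψ)) = fun ψ : ℝ => Complex.exp ((Complex.I * k) * ψ) from rfl]
    rw [integral_exp_mul_complex hc]
    have h2 : Complex.I * k * (2*π : ℝ) = k * (2 * π * Complex.I) := by push_cast; ring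
    rw [h2, Complex.exp_int_mul_two_pi_mul_I]
    simp

lemma eabs (i : ℤ) (x : ℝ) : ‖Complex.exp (Complex.I * i * x)‖ = 1 := by
  have : Complex.I * i * x = ((i * x : ℝ) : ℂ) * Complex.I := by push_cast; ring
  rw [this, Complex.norm_exp_ofReal_mul_I]

lemma summable_q {q : ℝ} (hq0 : 0 ≤ q) (hq1 : q < 1) (C : ℝ) :
    Summable (fun i : ℤ => C * q ^ i.natAbs) := by
  apply Summable.mul_left
  apply Summable.of_nat_of_neg <;>
  · simp only [Int.natAbs_neg, Int.natAbs_natCast]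
    exact summable_geometric_of_lt_one hq0 hq1

lemma coeff_lemma {u : ℂ → ℝ} {a : ℤ → ℂ} (hu : HasFourierExpansion u a)
    {r : ℝ} (hr0 : 0 ≤ r) (hr1 : r < 1) (j : ℤ) :
    (∫ ψ in (0:ℝ)..(2*π), (u ((r:ℂ) * Complex.exp (Complex.I * ψ)) : ℂ) *
        Complex.exp (-(Complex.I * j * ψ)))
      = 2 * π * (a j * (r:ℂ) ^ j.natAbs) := by
  set ρ : ℝ := (1 + r) / 2 with hρ
  have hρ0 : 0 < ρ := by positivity
  have hρ1 : ρ < 1 := by rw [hρ]; linarith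
  have hrρ : r < ρ := by rw [hρ]; linarith
  obtain ⟨hconj, hsum⟩ := hu
  have hSρ : Summable (fun i : ℤ => a i * (ρ:ℂ) ^ i.natAbs *
      Complex.exp (Complex.I * i * ((0:ℝ):ℂ))) := (hsum ρ 0 hρ0.le hρ1).summable
  have hSρ' : Summable (fun i : ℤ => ‖a i * (ρ:ℂ) ^ i.natAbs *
      Complex.exp (Complex.I * i * ((0:ℝ):ℂ))‖) := hSρ.norm
  set M : ℝ := ∑' i : ℤ, ‖a i * (ρ:ℂ) ^ i.natAbs * Complex.exp (Complex.I * i * ((0:ℝ):ℂ))‖ with hM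
  have hbd : ∀ i : ℤ, ‖a i‖ * ρ ^ i.natAbs ≤ M := by
    intro i
    have h := Summable.le_tsum hSρ' i (fun k _ => norm_nonneg _)
    rw [← hM] at h
    calc ‖a i‖ * ρ ^ i.natAbs
        = ‖a i * (ρ:ℂ) ^ i.natAbs * Complex.exp (Complex.I * i * ((0:ℝ):ℂ))‖ := by
          rw [norm_mul, norm_mul]
          simp [Complex.norm_real, abs_of_nonneg hρ0.le, eabs]
      _ ≤ M := h
  set q : ℝ := r / ρ with hq
  have hq0 : 0 ≤ q := by positivity
  have hq1 : q < 1 := by rw [hq, div_lt_one hρ0]; exact hrρ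
  have hρq : ρ * q = r := by rw [hq]; field_simp
  set F : ℤ → ℝ → ℂ := fun i ψ =>
    a i * (r:ℂ) ^ i.natAbs * Complex.exp (Complex.I * i * ψ) * Complex.exp (-(Complex.I * j * ψ))
  have key : HasSum (fun i : ℤ => ∫ ψ in (0:ℝ)..(2*π), F i ψ)
      (∫ ψ in (0:ℝ)..(2*π),
        (u ((r:ℂ) * Complex.exp (Complex.I * ψ)) : ℂ) * Complex.exp (-(Complex.I * j * ψ))) := by
    apply intervalIntegral.hasSum_integral_of_dominated_convergence
      (bound := fun i _ => M * q ^ i.natAbs)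
    · intro i
      apply Continuous.aestronglyMeasurable
      apply Continuous.mul
      · apply Continuous.mul continuous_const
        exact Complex.continuous_exp.comp (by continuity)
      · exact Complex.continuous_exp.comp (by continuity)
    · intro i
      filter_upwards with ψ _
      have hn : ‖F i ψ‖ = ‖a i‖ * r ^ i.natAbs := by
        simp only [F, norm_mul, eabs]
        have h2 : ‖Complex.exp (-(Complex.I * j * ψ))‖ = 1 := by
          have h1 : -(Complex.I * (j:ℂ) * (ψ:ℂ)) = Complex.I * ((-j : ℤ) : ℂ) * (ψ:ℂ) := by
            push_cast; ring
          rw [h1, eabs]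
        rw [h2]
        simp [Complex.norm_real, abs_of_nonneg hr0]
      rw [hn]
      calc ‖a i‖ * r ^ i.natAbs
          = (‖a i‖ * ρ ^ i.natAbs) * q ^ i.natAbs := by
            rw [← hρq, mul_pow, ← mul_assoc]
        _ ≤ M * q ^ i.natAbs := by
            apply mul_le_mul_of_nonneg_right (hbd i) (by positivity)
    · filter_upwards with ψ _
      exact summable_q hq0 hq1 M
    · exact _root_.intervalIntegrable_const
    · filter_upwards with ψ _
      exact (hsum r ψ hr0 hr1).mul_right _
  have heval : ∀ i : ℤ, (∫ ψ in (0:ℝ)..(2*π), F i ψ)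
      = if i = j then 2 * π * (a j * (r:ℂ) ^ j.natAbs) else 0 := by
    intro i
    have hFi : ∀ ψ : ℝ, F i ψ
        = a i * (r:ℂ) ^ i.natAbs * Complex.exp (Complex.I * ((i - j : ℤ) : ℂ) * ψ) := by
      intro ψ
      simp only [F]
      rw [mul_assoc, ← Complex.exp_add]
      congr 2
      push_cast
      ring
    simp only [hFi]
    rw [intervalIntegral.integral_const_mul, orth (i - j)]
    rcases eq_or_ne i j with h | h
    · subst h; rw [if_pos (sub_self i), if_pos rfl]; ring
    · rw [if_neg (sub_ne_zero.mpr h), if_neg h, mul_zero]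
  have hfin : HasSum (fun i : ℤ => if i = j then 2 * (π:ℂ) * (a j * (r:ℂ) ^ j.natAbs) else 0)
      (2 * (π:ℂ) * (a j * (r:ℂ) ^ j.natAbs)) := hasSum_ite_eq j _
  have key' : HasSum (fun i : ℤ => if i = j then 2 * (π:ℂ) * (a j * (r:ℂ) ^ j.natAbs) else 0)
      (∫ ψ in (0:ℝ)..(2*π),
        (u ((r:ℂ) * Complex.exp (Complex.I * ψ)) : ℂ) * Complex.exp (-(Complex.I * j * ψ))) := by
    convert key using 1
    funext i
    exact (heval i).symm
  exact key'.unique hfin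

noncomputable def Dker (k : ℕ) (ξ : ℝ) : ℂ :=
  ∑ l ∈ Finset.Icc (0:ℤ) k, Complex.exp (Complex.I * l * ξ)

lemma dker_expand (k : ℕ) (j : ℤ) (ξ : ℝ) :
    (Complex.normSq (Dker k ξ) : ℂ) * Complex.exp (-(Complex.I * j * ξ))
      = ∑ l ∈ Finset.Icc (0:ℤ) k, ∑ m ∈ Finset.Icc (0:ℤ) k,
          Complex.exp (Complex.I * ((l - m - j : ℤ) : ℂ) * ξ) := by
  rw [← Complex.mul_conj]
  unfold Dker
  rw [map_sum]
  rw [Finset.sum_mul_sum]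
  rw [Finset.sum_mul]
  apply Finset.sum_congr rfl
  intro l _
  rw [Finset.sum_mul]
  apply Finset.sum_congr rfl
  intro m _
  rw [← Complex.exp_conj, mul_assoc, ← Complex.exp_add, ← Complex.exp_add]
  congr 1
  simp only [map_mul, Complex.conj_I, Complex.conj_ofReal, map_intCast]
  push_cast
  ring

lemma fejer_coeff (k : ℕ) (j : ℤ) :
    (∫ ξ in (0:ℝ)..(2*π), (Complex.normSq (Dker k ξ) : ℂ) * Complex.exp (-(Complex.I * j * ξ)))
      = if j.natAbs ≤ k then ((k + 1 - j.natAbs : ℕ) : ℂ) * (2*π) else 0 := by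
  simp only [dker_expand k j]
  rw [intervalIntegral.integral_finset_sum]
  swap
  · intro l _
    apply Continuous.intervalIntegrable
    apply continuous_finset_sum
    intro m _
    exact Complex.continuous_exp.comp (by continuity)
  have hin : ∀ l ∈ Finset.Icc (0:ℤ) (k:ℤ),
      (∫ ξ in (0:ℝ)..(2*π), ∑ m ∈ Finset.Icc (0:ℤ) k,
        Complex.exp (Complex.I * ((l - m - j : ℤ) : ℂ) * ξ))
      = if l - j ∈ Finset.Icc (0:ℤ) (k:ℤ) then (2*π:ℂ) else 0 := by
    intro l _
    rw [intervalIntegral.integral_finset_sum]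
    swap
    · intro m _
      apply Continuous.intervalIntegrable
      exact Complex.continuous_exp.comp (by continuity)
    have : ∀ m ∈ Finset.Icc (0:ℤ) (k:ℤ),
        (∫ ξ in (0:ℝ)..(2*π), Complex.exp (Complex.I * ((l - m - j : ℤ) : ℂ) * ξ))
          = if m = l - j then (2*π:ℂ) else 0 := by
      intro m _
      rw [orth (l - m - j)]
      congr 1
      simp only [eq_iff_iff]
      omega
    rw [Finset.sum_congr rfl this, Finset.sum_ite_eq' (Finset.Icc (0:ℤ) (k:ℤ)) (l - j)
      (fun _ => (2*π:ℂ))]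
  rw [Finset.sum_congr rfl hin]
  rw [Finset.sum_ite, Finset.sum_const_zero, add_zero, Finset.sum_const]
  rcases le_or_gt j.natAbs k with hj | hj
  · rw [if_pos hj]
    have hfilter : (Finset.Icc (0:ℤ) (k:ℤ)).filter (fun l => l - j ∈ Finset.Icc (0:ℤ) (k:ℤ))
        = Finset.Icc (max 0 j) (min (k:ℤ) ((k:ℤ) + j)) := by
      ext l
      simp only [Finset.mem_filter, Finset.mem_Icc, le_max_iff, min_le_iff, Finset.mem_Icc,
        max_le_iff, le_min_iff]
      omega
    rw [hfilter, Int.card_Icc]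
    have hcard : (min (k:ℤ) ((k:ℤ) + j) + 1 - max 0 j).toNat = k + 1 - j.natAbs := by omega
    rw [hcard, nsmul_eq_mul]
  · rw [if_neg (by omega)]
    have hfilter : (Finset.Icc (0:ℤ) (k:ℤ)).filter (fun l => l - j ∈ Finset.Icc (0:ℤ) (k:ℤ))
        = ∅ := by
      ext l
      simp only [Finset.mem_filter, Finset.mem_Icc, Finset.notMem_empty, iff_false, not_and]
      omega
    rw [hfilter]
    simp

lemma telescope_first (m : ℕ → ℝ) (N : ℕ) (hm : ∀ k, N ≤ k → m k = 0) (j : ℕ) :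
    ∑ k ∈ Finset.Ico j N, (m k - 2 * m (k+1) + m (k+2)) = m j - m (j+1) := by
  rcases le_or_gt j N with hj | hj
  · have : ∀ k ∈ Finset.Ico j N, (m k - 2 * m (k+1) + m (k+2))
        = (fun i => m i - m (i+1)) k - (fun i => m i - m (i+1)) (k+1) := by
      intro k _; simp only; ring
    rw [Finset.sum_congr rfl this, Finset.sum_Ico_eq_sum_range]
    have : ∀ i ∈ Finset.range (N - j), (fun i => m i - m (i+1)) (j+i) - (fun i => m i - m (i+1)) (j+i+1)
        = (fun i => m (j+i) - m (j+i+1)) i - (fun i => m (j+i) - m (j+i+1)) (i+1) := by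
      intro i _
      simp only
      ring_nf
    rw [Finset.sum_congr rfl this, Finset.sum_range_sub']
    simp only [add_zero]
    have h1 : m (j + (N - j)) = 0 := hm _ (by omega)
    have h2 : m (j + (N - j) + 1) = 0 := hm _ (by omega)
    rw [h1, h2]
    ring
  · rw [Finset.Ico_eq_empty (by omega), Finset.sum_empty, hm j (by omega), hm (j+1) (by omega)]
    ring

lemma telescope_sum (m : ℕ → ℝ) (N : ℕ) (hm : ∀ k, N ≤ k → m k = 0) :
    ∀ d : ℕ, ∀ j : ℕ, j + d = N →
    ∑ k ∈ Finset.Ico j N, (m k - 2 * m (k+1) + m (k+2)) * ((k + 1 - j : ℕ) : ℝ) = m j := by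
  intro d
  induction d with
  | zero =>
    intro j hj
    have hjN : j = N := by omega
    subst hjN
    simp [Finset.Ico_self, hm j le_rfl]
  | succ d ih =>
    intro j hj
    have hjN : j < N := by omega
    rw [Finset.sum_eq_sum_Ico_succ_bot hjN]
    have hsplit : ∀ k ∈ Finset.Ico (j+1) N, (m k - 2 * m (k+1) + m (k+2)) * ((k + 1 - j : ℕ) : ℝ)
        = (m k - 2 * m (k+1) + m (k+2)) * ((k + 1 - (j+1) : ℕ) : ℝ)
          + (m k - 2 * m (k+1) + m (k+2)) := by
      intro k hk
      rw [Finset.mem_Ico] at hk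
      have : ((k + 1 - j : ℕ) : ℝ) = ((k + 1 - (j+1) : ℕ) : ℝ) + 1 := by
        rw [show k + 1 - j = (k + 1 - (j+1)) + 1 from by omega]
        push_cast
        ring
      rw [this]
      ring
    rw [Finset.sum_congr rfl hsplit, Finset.sum_add_distrib, ih (j+1) (by omega),
      telescope_first m N hm (j+1)]
    simp only [Nat.add_sub_cancel_left, Nat.cast_one]
    ring

noncomputable def sval (n : ℕ) : ℝ := (2*(n:ℝ))/(2*(n:ℝ)-1)

noncomputable def mseq (n j : ℕ) : ℝ :=
  if j ≤ n then (sval n)^j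
  else if j ≤ 2*n then (sval n)^n * (2*(n:ℝ) - j)/(n:ℝ)
  else 0

noncomputable def beta (n k : ℕ) : ℝ := mseq n k - 2 * mseq n (k+1) + mseq n (k+2)

section mfacts

variable {n : ℕ} (hn : 1 ≤ n)

include hn

lemma hden : (1:ℝ) ≤ 2*(n:ℝ)-1 := by
  have : (1:ℝ) ≤ (n:ℝ) := by exact_mod_cast hn
  linarith

lemma hs_ge : 1 ≤ sval n := by
  have h := hden hn
  rw [sval, le_div_iff₀ (by linarith)]
  linarith

lemma hs_le2 : sval n ≤ 2 := by
  have h := hden hn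
  rw [sval, div_le_iff₀ (by linarith)]
  linarith

lemma hs_sub : sval n - 1 = 1/(2*(n:ℝ)-1) := by
  have h := hden hn
  rw [sval]
  field_simp
  ring

lemma hs_pow : (sval n)^n ≤ 2 := by
  have h := hden hn
  have hn1 : (1:ℝ) ≤ (n:ℝ) := by exact_mod_cast hn
  have hhalf : 1/(2*(n:ℝ)) ≤ 1/2 := by
    apply div_le_div_of_nonneg_left <;> linarith
  have hpos : (0:ℝ) < 1/(2*(n:ℝ)) := by positivity
  set r : ℝ := 1 - 1/(2*(n:ℝ)) with hr
  have hrpos : 0 < r := by rw [hr]; linarith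
  have hber : (1:ℝ)/2 ≤ r^n := by
    have h0 := one_add_mul_le_pow (a := -(1/(2*(n:ℝ)))) (by linarith) n
    have heq : (1:ℝ) + n * -(1/(2*(n:ℝ))) = 1/2 := by field_simp; ring
    have heq2 : (1:ℝ) + -(1/(2*(n:ℝ))) = r := by rw [hr]; ring
    rw [heq, heq2] at h0
    exact h0
  have hsr : sval n = r⁻¹ := by
    have hr' : r = (2*(n:ℝ)-1)/(2*(n:ℝ)) := by
      rw [hr]; field_simp
    rw [hr', sval, inv_div]
  rw [hsr, inv_pow]
  have h2 : (2:ℝ)⁻¹ ≤ r^n := by linarith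
  calc (r^n)⁻¹ ≤ ((2:ℝ)⁻¹)⁻¹ := by
        apply inv_anti₀ (by norm_num) h2
    _ = 2 := by norm_num

lemma mseq_supp : ∀ k, 2*n ≤ k → mseq n k = 0 := by
  intro k hk
  rw [mseq]
  rcases eq_or_lt_of_le hk with h | h
  · rw [if_neg (by omega), if_pos (by omega), ← h]
    push_cast
    ring
  · rw [if_neg (by omega), if_neg (by omega)]

omit hn in
lemma mseq_low {j : ℕ} (hj : j ≤ n) : mseq n j = (sval n)^j := by
  rw [mseq, if_pos hj]

lemma mseq_mid {j : ℕ} (hj1 : n ≤ j) (hj2 : j ≤ 2*n) :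
    mseq n j = (sval n)^n * (2*(n:ℝ) - j)/(n:ℝ) := by
  have hn0 : (n:ℝ) ≠ 0 := by positivity
  rcases eq_or_lt_of_le hj1 with h | h
  · rw [mseq, if_pos (by omega), ← h]
    have h2 : (2*(n:ℝ) - n) = n := by ring
    rw [h2, mul_div_assoc, div_self hn0, mul_one]
  · rw [mseq, if_neg (by omega), if_pos hj2]

end mfacts

section bfacts

variable {n : ℕ} (hn : 1 ≤ n)

include hn

lemma beta_low {k : ℕ} (hk : k + 2 ≤ n) : beta n k = (sval n)^k * (sval n - 1)^2 := by
  rw [beta, mseq_low (by omega), mseq_low (by omega), mseq_low (by omega)]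
  ring

lemma beta_junc {k : ℕ} (hk : k + 1 = n) :
    beta n k = (sval n)^k * (1 - sval n - sval n/(n:ℝ)) := by
  have hn0 : (n:ℝ) ≠ 0 := by positivity
  rw [beta, mseq_low (by omega), mseq_low (by omega),
    mseq_mid hn (by omega) (by omega)]
  rw [show k + 1 = n from hk]
  have h1 : (sval n)^n = (sval n)^k * sval n := by
    rw [← pow_succ, hk]
  have h2 : (2*(n:ℝ) - (n + 2 : ℕ)) = (n:ℝ) - 2 := by push_cast [← hk]; ring
  rw [show k + 2 = n + 1 from by omega]
  have h3 : (2*(n:ℝ) - (n + 1 : ℕ)) = (n:ℝ) - 1 := by push_cast; ring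
  rw [h3, h1]
  field_simp
  ring

lemma beta_mid {k : ℕ} (hk1 : n ≤ k) (hk2 : k + 2 ≤ 2*n) : beta n k = 0 := by
  rw [beta, mseq_mid hn (by omega) (by omega), mseq_mid hn (by omega) (by omega),
    mseq_mid hn (by omega) (by omega)]
  push_cast
  ring

lemma beta_top {k : ℕ} (hk : k + 1 = 2*n) : beta n k = (sval n)^n/(n:ℝ) := by
  have h1 : mseq n (k+1) = 0 := mseq_supp hn _ (by omega)
  have h2 : mseq n (k+2) = 0 := mseq_supp hn _ (by omega)
  rw [beta, h1, h2, mseq_mid hn (by omega) (by omega)]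
  have : (2*(n:ℝ) - (k:ℕ)) = 1 := by
    have : (k:ℝ) = 2*n - 1 := by
      have : ((k:ℕ):ℝ) + 1 = ((2*n : ℕ):ℝ) := by exact_mod_cast congrArg (Nat.cast (R := ℝ)) hk
      push_cast at this
      linarith
    rw [this]; ring
  rw [this]
  ring

lemma beta_term_bound {k : ℕ} (hk : k ∈ Finset.range (2*n)) :
    ((k:ℝ)+1) * |beta n k| ≤
      (if k + 2 ≤ n then 2/(n:ℝ) else 0) + (if k + 1 = n then 6 else 0)
        + (if k + 1 = 2*n then 4 else 0) := by
  rw [Finset.mem_range] at hk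
  have hn0 : (0:ℝ) < (n:ℝ) := by positivity
  have hs1 := hs_ge hn
  have hs2 := hs_le2 hn
  have hspow := hs_pow hn
  have hden' := hden hn
  have hnn : (1:ℝ) ≤ (n:ℝ) := by exact_mod_cast hn
  have hi1 : (0:ℝ) ≤ (if k + 2 ≤ n then 2/(n:ℝ) else 0) := by split_ifs <;> positivity
  have hi2 : (0:ℝ) ≤ (if k + 1 = n then (6:ℝ) else 0) := by split_ifs <;> norm_num
  have hi3 : (0:ℝ) ≤ (if k + 1 = 2*n then (4:ℝ) else 0) := by split_ifs <;> norm_num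
  by_cases h1 : k + 2 ≤ n
  · have hb : ((k:ℝ)+1) * |beta n k| ≤ 2/(n:ℝ) := by
      rw [beta_low hn h1, abs_of_nonneg (by positivity)]
      have hk1 : (k:ℝ) + 1 ≤ n := by
        have : (k:ℝ) + 2 ≤ n := by exact_mod_cast h1
        linarith
      have hA : (sval n)^k ≤ 2 := by
        calc (sval n)^k ≤ (sval n)^n := pow_le_pow_right₀ (by linarith) (by omega)
          _ ≤ 2 := hspow
      have hB : (sval n - 1) * n ≤ 1 := by
        rw [hs_sub hn]
        rw [div_mul_eq_mul_div, div_le_one (by linarith)]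
        linarith
      have hB0 : 0 ≤ sval n - 1 := by linarith
      rw [le_div_iff₀ hn0]
      calc ((k:ℝ)+1) * ((sval n)^k * (sval n - 1)^2) * n
          ≤ (n:ℝ) * ((sval n)^k * (sval n - 1)^2) * n := by
            apply mul_le_mul_of_nonneg_right _ hn0.le
            apply mul_le_mul_of_nonneg_right hk1 (by positivity)
        _ = (sval n)^k * ((sval n - 1) * n)^2 := by ring
        _ ≤ 2 * 1^2 := by
            apply mul_le_mul hA _ (by positivity) (by norm_num)
            rw [one_pow]
            calc ((sval n - 1) * n)^2 ≤ 1^2 := by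
                  apply sq_le_sq' (by nlinarith) hB
              _ = 1 := one_pow 2
        _ = 2 := by norm_num
    rw [if_pos h1]
    linarith
  · by_cases h2 : k + 1 = n
    · have hb : ((k:ℝ)+1) * |beta n k| ≤ 6 := by
        rw [beta_junc hn h2]
        have hX0 : 0 ≤ sval n - 1 + sval n/(n:ℝ) :=
          add_nonneg (by linarith) (by positivity)
        have habs : |(sval n)^k * (1 - sval n - sval n/(n:ℝ))|
            = (sval n)^k * (sval n - 1 + sval n/(n:ℝ)) := by
          rw [abs_mul, abs_of_nonneg (by positivity), abs_of_nonpos (by linarith)]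
          ring_nf
        rw [habs]
        have hk1 : (k:ℝ) + 1 = n := by exact_mod_cast h2
        have hA : (sval n)^k ≤ 2 := by
          calc (sval n)^k ≤ (sval n)^n := pow_le_pow_right₀ (by linarith) (by omega)
            _ ≤ 2 := hspow
        have hX : sval n - 1 + sval n/(n:ℝ) ≤ 3/(n:ℝ) := by
          have e1 : sval n - 1 ≤ 1/(n:ℝ) := by
            rw [hs_sub hn]
            apply div_le_div_of_nonneg_left (by norm_num) hn0
            linarith
          have e2 : sval n/(n:ℝ) ≤ 2/(n:ℝ) := by gcongr
          have : (1:ℝ)/n + 2/n = 3/n := by ring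
          linarith
        rw [hk1]
        calc (n:ℝ) * ((sval n)^k * (sval n - 1 + sval n/(n:ℝ)))
            ≤ (n:ℝ) * (2 * (3/(n:ℝ))) := by
              apply mul_le_mul_of_nonneg_left _ hn0.le
              exact mul_le_mul hA hX hX0 (by norm_num)
          _ = 6 := by field_simp; norm_num
      rw [if_neg h1, if_pos h2]
      linarith
    · by_cases h3 : k + 1 = 2*n
      · have hb : ((k:ℝ)+1) * |beta n k| ≤ 4 := by
          rw [beta_top hn h3]
          have hk1 : (k:ℝ) + 1 = 2*n := by exact_mod_cast h3
          rw [hk1, abs_of_nonneg (by positivity)]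
          rw [div_eq_mul_inv]
          calc 2*(n:ℝ) * ((sval n)^n * ((n:ℝ))⁻¹)
              = 2 * (sval n)^n := by field_simp
            _ ≤ 2 * 2 := by linarith
            _ = 4 := by norm_num
        rw [if_neg h1, if_neg h2, if_pos h3]
        linarith
      · have hb : beta n k = 0 := beta_mid hn (by omega) (by omega)
        rw [hb, abs_zero, mul_zero, if_neg h1, if_neg h2, if_neg h3]
        norm_num

lemma beta_sum_bound :
    ∑ k ∈ Finset.range (2*n), ((k:ℝ)+1) * |beta n k| ≤ 12 := by
  have hn0 : (0:ℝ) < (n:ℝ) := by positivity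
  calc ∑ k ∈ Finset.range (2*n), ((k:ℝ)+1) * |beta n k|
      ≤ ∑ k ∈ Finset.range (2*n),
          ((if k + 2 ≤ n then 2/(n:ℝ) else 0) + (if k + 1 = n then 6 else 0)
            + (if k + 1 = 2*n then 4 else 0)) :=
        Finset.sum_le_sum (fun k hk => beta_term_bound hn hk)
    _ ≤ 2 + 6 + 4 := by
        rw [Finset.sum_add_distrib, Finset.sum_add_distrib]
        have t1 : ∑ k ∈ Finset.range (2*n), (if k + 2 ≤ n then 2/(n:ℝ) else 0) ≤ 2 := by
          rw [Finset.sum_ite, Finset.sum_const_zero, add_zero, Finset.sum_const, nsmul_eq_mul]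
          have hcard : ((Finset.range (2*n)).filter (fun k => k + 2 ≤ n)).card ≤ n := by
            calc ((Finset.range (2*n)).filter (fun k => k + 2 ≤ n)).card
                ≤ (Finset.range n).card := by
                  apply Finset.card_le_card
                  intro k hk
                  simp only [Finset.mem_filter, Finset.mem_range] at hk ⊢
                  omega
              _ = n := Finset.card_range n
          calc (((Finset.range (2*n)).filter (fun k => k + 2 ≤ n)).card : ℝ) * (2/(n:ℝ))
              ≤ (n:ℝ) * (2/(n:ℝ)) := by
                apply mul_le_mul_of_nonneg_right _ (by positivity)
                exact_mod_cast hcard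
            _ = 2 := by field_simp
        have t2 : ∑ k ∈ Finset.range (2*n), (if k + 1 = n then (6:ℝ) else 0) ≤ 6 := by
          rw [Finset.sum_ite, Finset.sum_const_zero, add_zero, Finset.sum_const, nsmul_eq_mul]
          have hcard : ((Finset.range (2*n)).filter (fun k => k + 1 = n)).card ≤ 1 := by
            calc ((Finset.range (2*n)).filter (fun k => k + 1 = n)).card
                ≤ ({n - 1} : Finset ℕ).card := by
                  apply Finset.card_le_card
                  intro k hk
                  simp only [Finset.mem_filter, Finset.mem_range, Finset.mem_singleton] at hk ⊢
                  omega
              _ = 1 := rfl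
          calc (((Finset.range (2*n)).filter (fun k => k + 1 = n)).card : ℝ) * 6
              ≤ 1 * 6 := by
                apply mul_le_mul_of_nonneg_right _ (by norm_num)
                exact_mod_cast hcard
            _ = 6 := by norm_num
        have t3 : ∑ k ∈ Finset.range (2*n), (if k + 1 = 2*n then (4:ℝ) else 0) ≤ 4 := by
          rw [Finset.sum_ite, Finset.sum_const_zero, add_zero, Finset.sum_const, nsmul_eq_mul]
          have hcard : ((Finset.range (2*n)).filter (fun k => k + 1 = 2*n)).card ≤ 1 := by
            calc ((Finset.range (2*n)).filter (fun k => k + 1 = 2*n)).card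
                ≤ ({2*n - 1} : Finset ℕ).card := by
                  apply Finset.card_le_card
                  intro k hk
                  simp only [Finset.mem_filter, Finset.mem_range, Finset.mem_singleton] at hk ⊢
                  omega
              _ = 1 := rfl
          calc (((Finset.range (2*n)).filter (fun k => k + 1 = 2*n)).card : ℝ) * 4
              ≤ 1 * 4 := by
                apply mul_le_mul_of_nonneg_right _ (by norm_num)
                exact_mod_cast hcard
            _ = 4 := by norm_num
        linarith
    _ = 12 := by norm_num

end bfacts

lemma coeff_summable {u : ℂ → ℝ} {a : ℤ → ℂ} (hu : HasFourierExpansion u a)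
    {r : ℝ} (hr0 : 0 ≤ r) (hr1 : r < 1) :
    Summable (fun i : ℤ => ‖a i‖ * r ^ i.natAbs) := by
  set ρ : ℝ := (1 + r) / 2 with hρ
  have hρ0 : 0 < ρ := by positivity
  have hρ1 : ρ < 1 := by rw [hρ]; linarith
  have hrρ : r < ρ := by rw [hρ]; linarith
  have hSρ : Summable (fun i : ℤ => a i * (ρ:ℂ) ^ i.natAbs *
      Complex.exp (Complex.I * i * ((0:ℝ):ℂ))) := (hu.2 ρ 0 hρ0.le hρ1).summable
  have hSρ' : Summable (fun i : ℤ => ‖a i * (ρ:ℂ) ^ i.natAbs *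
      Complex.exp (Complex.I * i * ((0:ℝ):ℂ))‖) := hSρ.norm
  set M : ℝ := ∑' i : ℤ, ‖a i * (ρ:ℂ) ^ i.natAbs * Complex.exp (Complex.I * i * ((0:ℝ):ℂ))‖ with hM
  have hbd : ∀ i : ℤ, ‖a i‖ * ρ ^ i.natAbs ≤ M := by
    intro i
    have h := Summable.le_tsum hSρ' i (fun k _ => norm_nonneg _)
    rw [← hM] at h
    calc ‖a i‖ * ρ ^ i.natAbs
        = ‖a i * (ρ:ℂ) ^ i.natAbs * Complex.exp (Complex.I * i * ((0:ℝ):ℂ))‖ := by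
          rw [norm_mul, norm_mul]
          simp [Complex.norm_real, abs_of_nonneg hρ0.le, eabs]
      _ ≤ M := h
  set q : ℝ := r / ρ with hq
  have hq0 : 0 ≤ q := by positivity
  have hq1 : q < 1 := by rw [hq, div_lt_one hρ0]; exact hrρ
  have hρq : ρ * q = r := by rw [hq]; field_simp
  apply Summable.of_nonneg_of_le (fun i => by positivity) (fun i => ?_) (summable_q hq0 hq1 M)
  calc ‖a i‖ * r ^ i.natAbs
      = (‖a i‖ * ρ ^ i.natAbs) * q ^ i.natAbs := by
        rw [← hρq, mul_pow, ← mul_assoc]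
    _ ≤ M * q ^ i.natAbs := mul_le_mul_of_nonneg_right (hbd i) (by positivity)

lemma u_cont {u : ℂ → ℝ} {a : ℤ → ℂ} (hu : HasFourierExpansion u a)
    {r : ℝ} (hr0 : 0 ≤ r) (hr1 : r < 1) :
    Continuous (fun ψ : ℝ => ((u ((r:ℂ) * Complex.exp (Complex.I * ψ)) : ℂ))) := by
  have heq : (fun ψ : ℝ => ((u ((r:ℂ) * Complex.exp (Complex.I * ψ)) : ℂ)))
      = fun ψ : ℝ => ∑' j : ℤ, a j * (r:ℂ) ^ j.natAbs * Complex.exp (Complex.I * j * ψ) := by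
    funext ψ
    exact ((hu.2 r ψ hr0 hr1).tsum_eq).symm
  rw [heq]
  apply continuous_tsum (u := fun i : ℤ => ‖a i‖ * r ^ i.natAbs)
  · intro i
    apply Continuous.mul continuous_const
    exact Complex.continuous_exp.comp (by continuity)
  · exact coeff_summable hu hr0 hr1
  · intro i ψ
    rw [norm_mul, norm_mul, eabs]
    simp [Complex.norm_real, abs_of_nonneg hr0]

noncomputable def Wker (n : ℕ) (ξ : ℝ) : ℝ :=
  ∑ k ∈ Finset.range (2*n), beta n k * Complex.normSq (Dker k ξ)

lemma dker_cont (k : ℕ) : Continuous (Dker k) := by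
  unfold Dker
  apply continuous_finset_sum
  intro l _
  exact Complex.continuous_exp.comp (by continuity)

lemma wker_cont (n : ℕ) : Continuous (Wker n) := by
  unfold Wker
  apply continuous_finset_sum
  intro k _
  exact Continuous.mul continuous_const (Complex.continuous_normSq.comp (dker_cont k))

lemma wker_coeff {n : ℕ} (hn : 1 ≤ n) (j : ℤ) (hj : j.natAbs ≤ 2*n) :
    (∫ ξ in (0:ℝ)..(2*π), (Wker n ξ : ℂ) * Complex.exp (-(Complex.I * j * ξ)))
      = (2*π:ℂ) * (mseq n j.natAbs : ℝ) := by
  have hcast : ∀ ξ : ℝ, (Wker n ξ : ℂ) * Complex.exp (-(Complex.I * j * ξ))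
      = ∑ k ∈ Finset.range (2*n), (beta n k : ℂ) *
          ((Complex.normSq (Dker k ξ) : ℂ) * Complex.exp (-(Complex.I * j * ξ))) := by
    intro ξ
    rw [Wker]
    push_cast
    rw [Finset.sum_mul]
    apply Finset.sum_congr rfl
    intro k _
    ring
  simp only [hcast]
  rw [intervalIntegral.integral_finset_sum]
  swap
  · intro k _
    apply Continuous.intervalIntegrable
    apply Continuous.mul continuous_const
    apply Continuous.mul
    · exact Complex.continuous_ofReal.comp (Complex.continuous_normSq.comp (dker_cont k))
    · exact Complex.continuous_exp.comp (by continuity)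
  have heach : ∀ k ∈ Finset.range (2*n),
      (∫ ξ in (0:ℝ)..(2*π), (beta n k : ℂ) *
        ((Complex.normSq (Dker k ξ) : ℂ) * Complex.exp (-(Complex.I * j * ξ))))
      = ((beta n k * (if j.natAbs ≤ k then ((k + 1 - j.natAbs : ℕ) : ℝ) else 0) : ℝ) : ℂ)
          * (2*π:ℂ) := by
    intro k _
    rw [intervalIntegral.integral_const_mul, fejer_coeff k j]
    split_ifs with h
    · push_cast
      ring
    · push_cast
      ring
  rw [Finset.sum_congr rfl heach, ← Finset.sum_mul, ← Complex.ofReal_sum]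
  have hreal : ∑ k ∈ Finset.range (2*n),
      beta n k * (if j.natAbs ≤ k then ((k + 1 - j.natAbs : ℕ) : ℝ) else 0)
      = mseq n j.natAbs := by
    simp only [mul_ite, mul_zero]
    rw [Finset.sum_ite, Finset.sum_const_zero, add_zero]
    have hfil : (Finset.range (2*n)).filter (fun k => j.natAbs ≤ k)
        = Finset.Ico j.natAbs (2*n) := by
      ext k
      simp only [Finset.mem_filter, Finset.mem_range, Finset.mem_Ico]
      omega
    rw [hfil]
    have := telescope_sum (mseq n) (2*n) (mseq_supp hn) (2*n - j.natAbs) j.natAbs (by omega)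
    rw [← this]
    rfl
  rw [hreal]
  ring

lemma fejer_mass (k : ℕ) :
    (∫ ξ in (0:ℝ)..(2*π), Complex.normSq (Dker k ξ)) = ((k:ℝ)+1)*(2*π) := by
  have h := fejer_coeff k 0
  simp only [Int.cast_zero, mul_zero, zero_mul, neg_zero, Complex.exp_zero, mul_one,
    Int.natAbs_zero, Nat.sub_zero, if_pos (Nat.zero_le k)] at h
  rw [intervalIntegral.integral_ofReal] at h
  have h2 : (((∫ ξ in (0:ℝ)..(2*π), Complex.normSq (Dker k ξ)) : ℝ) : ℂ)
      = ((((k:ℝ)+1)*(2*π) : ℝ) : ℂ) := by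
    rw [h]
    push_cast
    ring
  exact_mod_cast h2

lemma wker_l1 {n : ℕ} (hn : 1 ≤ n) :
    (∫ ξ in (0:ℝ)..(2*π), |Wker n ξ|) ≤ 12 * (2*π) := by
  have hπ : (0:ℝ) ≤ 2*π := by positivity
  calc (∫ ξ in (0:ℝ)..(2*π), |Wker n ξ|)
      ≤ ∫ ξ in (0:ℝ)..(2*π), ∑ k ∈ Finset.range (2*n), |beta n k| * Complex.normSq (Dker k ξ) := by
        apply intervalIntegral.integral_mono_on hπ
        · exact ((wker_cont n).abs).intervalIntegrable _ _
        · apply Continuous.intervalIntegrable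
          apply continuous_finset_sum
          intro k _
          exact Continuous.mul continuous_const (Complex.continuous_normSq.comp (dker_cont k))
        · intro ξ _
          rw [Wker]
          calc |∑ k ∈ Finset.range (2*n), beta n k * Complex.normSq (Dker k ξ)|
              ≤ ∑ k ∈ Finset.range (2*n), |beta n k * Complex.normSq (Dker k ξ)| :=
                Finset.abs_sum_le_sum_abs _ _
            _ = ∑ k ∈ Finset.range (2*n), |beta n k| * Complex.normSq (Dker k ξ) := by
                apply Finset.sum_congr rfl
                intro k _
                rw [abs_mul, abs_of_nonneg (Complex.normSq_nonneg _)]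
    _ = ∑ k ∈ Finset.range (2*n), |beta n k| * (((k:ℝ)+1)*(2*π)) := by
        rw [intervalIntegral.integral_finset_sum]
        · apply Finset.sum_congr rfl
          intro k _
          rw [intervalIntegral.integral_const_mul, fejer_mass]
        · intro k _
          apply Continuous.intervalIntegrable
          exact Continuous.mul continuous_const (Complex.continuous_normSq.comp (dker_cont k))
    _ = (∑ k ∈ Finset.range (2*n), ((k:ℝ)+1) * |beta n k|) * (2*π) := by
        rw [Finset.sum_mul]
        apply Finset.sum_congr rfl
        intro k _
        ring
    _ ≤ 12 * (2*π) := mul_le_mul_of_nonneg_right (beta_sum_bound hn) hπ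

lemma trig_periodic (c : ℤ → ℂ) (S : Finset ℤ) :
    Function.Periodic
      (fun t : ℝ => ‖∑ j ∈ S, c j * Complex.exp (Complex.I * j * t)‖) (2*π) := by
  intro t
  simp only
  congr 1
  apply Finset.sum_congr rfl
  intro j _
  congr 1
  have h1 : Complex.I * j * ((t + 2*π:ℝ):ℂ) = Complex.I*j*t + j*(2*π*Complex.I) := by
    push_cast; ring
  rw [h1, Complex.exp_add, Complex.exp_int_mul_two_pi_mul_I, mul_one]

lemma conv_bound {u : ℂ → ℝ} {a : ℤ → ℂ} (hu : HasFourierExpansion u a)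
    {r : ℝ} (hr0 : 0 ≤ r) (hr1 : r < 1) {B : ℝ}
    (hB : ∀ ψ : ℝ, |u ((r:ℂ) * Complex.exp (Complex.I * ψ))| ≤ B)
    (c : ℤ → ℂ) (n : ℕ) (φ : ℝ) :
    ‖∑ j ∈ Finset.Icc (-(n:ℤ)) (n:ℤ),
        a j * (r:ℂ)^j.natAbs * c j * Complex.exp (Complex.I * j * φ)‖
      ≤ B * ((1/(2*π)) * ∫ t in (0:ℝ)..(2*π),
          ‖∑ j ∈ Finset.Icc (-(n:ℤ)) (n:ℤ), c j * Complex.exp (Complex.I * j * t)‖) := by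
  have hπ : (0:ℝ) < 2*π := by positivity
  set S := Finset.Icc (-(n:ℤ)) (n:ℤ) with hS
  set P : ℝ → ℂ := fun t => ∑ j ∈ S, c j * Complex.exp (Complex.I * j * t) with hP
  set ur : ℝ → ℂ := fun ψ => ((u ((r:ℂ) * Complex.exp (Complex.I * ψ)) : ℂ)) with hur
  have hurc : Continuous ur := u_cont hu hr0 hr1
  have hPc : Continuous P := by
    apply continuous_finset_sum
    intro j _
    exact Continuous.mul continuous_const (Complex.continuous_exp.comp (by continuity))
  -- identity
  have hiden : (∫ ψ in (0:ℝ)..(2*π), ur ψ * P (φ - ψ))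
      = (2*π:ℂ) * ∑ j ∈ S, a j * (r:ℂ)^j.natAbs * c j * Complex.exp (Complex.I * j * φ) := by
    have hexp : ∀ ψ : ℝ, ur ψ * P (φ - ψ)
        = ∑ j ∈ S, (c j * Complex.exp (Complex.I * j * φ)) *
            (ur ψ * Complex.exp (-(Complex.I * j * ψ))) := by
      intro ψ
      rw [hP]
      simp only
      rw [Finset.mul_sum]
      apply Finset.sum_congr rfl
      intro j _
      have h1 : Complex.I * j * ((φ - ψ : ℝ):ℂ)
          = Complex.I * j * φ + (-(Complex.I * j * ψ)) := by push_cast; ring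
      rw [h1, Complex.exp_add]
      ring
    simp only [hexp]
    rw [intervalIntegral.integral_finset_sum]
    swap
    · intro j _
      apply Continuous.intervalIntegrable
      apply Continuous.mul continuous_const
      exact Continuous.mul hurc (Complex.continuous_exp.comp (by continuity))
    have heach : ∀ j ∈ S, (∫ ψ in (0:ℝ)..(2*π),
        (c j * Complex.exp (Complex.I * j * φ)) * (ur ψ * Complex.exp (-(Complex.I * j * ψ))))
        = (2*π:ℂ) * (a j * (r:ℂ)^j.natAbs * c j * Complex.exp (Complex.I * j * φ)) := by
      intro j _
      rw [intervalIntegral.integral_const_mul, coeff_lemma hu hr0 hr1 j]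
      push_cast
      ring
    rw [Finset.sum_congr rfl heach, ← Finset.mul_sum]
  -- bound
  have habs : ‖∑ j ∈ S, a j * (r:ℂ)^j.natAbs * c j * Complex.exp (Complex.I * j * φ)‖
      = (1/(2*π)) * ‖∫ ψ in (0:ℝ)..(2*π), ur ψ * P (φ - ψ)‖ := by
    rw [hiden, norm_mul]
    have : ‖(2*π:ℂ)‖ = 2*π := by
      rw [show (2*π:ℂ) = ((2*π:ℝ):ℂ) by push_cast; ring, Complex.norm_real, Real.norm_eq_abs, abs_of_pos hπ]
    rw [this]
    field_simp
    congr 1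
    apply Finset.sum_congr rfl
    intro x _
    ring
  rw [habs]
  have hPsh : Continuous fun ψ : ℝ => P (φ - ψ) :=
    hPc.comp (continuous_const.sub continuous_id)
  have hc1 : Continuous fun ψ : ℝ => ur ψ * P (φ - ψ) := hurc.mul hPsh
  have hnormbound : ‖∫ ψ in (0:ℝ)..(2*π), ur ψ * P (φ - ψ)‖
      ≤ ∫ ψ in (0:ℝ)..(2*π), B * ‖P (φ - ψ)‖ := by
    calc ‖∫ ψ in (0:ℝ)..(2*π), ur ψ * P (φ - ψ)‖
        ≤ ∫ ψ in (0:ℝ)..(2*π), ‖ur ψ * P (φ - ψ)‖ :=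
          intervalIntegral.norm_integral_le_integral_norm hπ.le
      _ ≤ ∫ ψ in (0:ℝ)..(2*π), B * ‖P (φ - ψ)‖ := by
          apply intervalIntegral.integral_mono_on hπ.le
          · exact hc1.norm.intervalIntegrable _ _
          · exact (continuous_const.mul (continuous_norm.comp hPsh)).intervalIntegrable _ _
          · intro ψ _
            rw [norm_mul]
            apply mul_le_mul_of_nonneg_right _ (norm_nonneg _)
            rw [hur]
            simp only
            rw [Complex.norm_real, Real.norm_eq_abs]
            exact hB ψ
  have hshift : (∫ ψ in (0:ℝ)..(2*π), ‖P (φ - ψ)‖)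
      = ∫ t in (0:ℝ)..(2*π), ‖P t‖ := by
    rw [intervalIntegral.integral_comp_sub_left (fun t => ‖P t‖) φ]
    have hper : Function.Periodic (fun t : ℝ => ‖P t‖) (2*π) := trig_periodic c S
    have h1 : φ - 0 = (φ - 2*π) + 2*π := by ring
    have h2 : (2*π:ℝ) = 0 + 2*π := by ring
    rw [h1]
    rw [hper.intervalIntegral_add_eq (φ - 2*π) 0]
    rw [← h2]
  have hfinal : (∫ ψ in (0:ℝ)..(2*π), B * ‖P (φ - ψ)‖)
      = B * ∫ t in (0:ℝ)..(2*π), ‖P t‖ := by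
    rw [intervalIntegral.integral_const_mul, hshift]
  calc (1/(2*π)) * ‖∫ ψ in (0:ℝ)..(2*π), ur ψ * P (φ - ψ)‖
      ≤ (1/(2*π)) * (B * ∫ t in (0:ℝ)..(2*π), ‖P t‖) := by
        apply mul_le_mul_of_nonneg_left _ (by positivity)
        rw [← hfinal]
        exact hnormbound
    _ = B * ((1/(2*π)) * ∫ t in (0:ℝ)..(2*π), ‖P t‖) := by ring

/-- If `u ∈ h_g^∞` with Fourier coefficients `a`, then for every
trigonometric polynomial `P(θ) = ∑_{|j|≤n} c_j e^{ijθ}` one has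
`‖u * P‖_∞ ≤ C ‖P‖_{L¹} g(n)`. -/
theorem growth_convolution_bound (g : ℝ → ℝ) (D : ℝ) (hg : IsDoublingWeight g D)
    (u : ℂ → ℝ) (a : ℤ → ℂ) (hu : HasFourierExpansion u a)
    (K : ℝ) (hbound : ∀ z : ℂ, ‖z‖ < 1 → |u z| ≤ K * g (1 / (1 - ‖z‖))) :
    ∃ C : ℝ, ∀ n : ℕ, 1 ≤ n → ∀ c : ℤ → ℂ, ∀ θ : ℝ,
      ‖∑ j ∈ Finset.Icc (-(n : ℤ)) (n : ℤ),
          a j * c j * Complex.exp (Complex.I * (j : ℂ) * (θ : ℂ))‖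
        ≤ C * ((1 / (2 * Real.pi)) * ∫ φ in (0 : ℝ)..(2 * Real.pi),
            ‖∑ j ∈ Finset.Icc (-(n : ℤ)) (n : ℤ),
              c j * Complex.exp (Complex.I * (j : ℂ) * (φ : ℂ))‖) * g (n : ℝ) := by
  obtain ⟨hgc, hgm, hgpos, hg1, hgtop, hgdbl⟩ := hg
  refine ⟨12 * (K * D), ?_⟩
  intro n hn c θ
  have hπ : (0:ℝ) < 2*π := by positivity
  have hn' : (1:ℝ) ≤ (n:ℝ) := by exact_mod_cast hn
  have hn0 : (0:ℝ) < (n:ℝ) := by linarith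
  set r : ℝ := 1 - 1/(2*(n:ℝ)) with hr
  have hhalf : 1/(2*(n:ℝ)) ≤ 1/2 := by
    apply div_le_div_of_nonneg_left <;> linarith
  have hpos2 : (0:ℝ) < 1/(2*(n:ℝ)) := by positivity
  have hr0 : 0 ≤ r := by rw [hr]; linarith
  have hr1 : r < 1 := by rw [hr]; linarith
  have hK0 : 0 ≤ K := by
    have h0 := hbound 0 (by norm_num)
    simp only [norm_zero, sub_zero, div_one, hg1, mul_one] at h0
    exact le_trans (abs_nonneg _) h0
  have hsvr : sval n * r = 1 := by
    rw [sval, hr]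
    have h1 : 2*(n:ℝ) - 1 ≠ 0 := by
      have := hden hn; intro h; rw [h] at this; linarith
    have h2 : 2*(n:ℝ) ≠ 0 := by positivity
    field_simp
  -- the sup bound on the circle of radius r
  have hB : ∀ ψ : ℝ, |u ((r:ℂ) * Complex.exp (Complex.I * ψ))| ≤ K * g (2*(n:ℝ)) := by
    intro ψ
    have habsz : ‖(r:ℂ) * Complex.exp (Complex.I * ψ)‖ = r := by
      rw [norm_mul, Complex.norm_real, Real.norm_eq_abs, abs_of_nonneg hr0]
      rw [show Complex.I * (ψ:ℂ) = (ψ:ℂ) * Complex.I from mul_comm _ _,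
        Complex.norm_exp_ofReal_mul_I, mul_one]
    have h1 := hbound _ (by rw [habsz]; exact hr1)
    rw [habsz] at h1
    have h2 : 1/(1 - r) = 2*(n:ℝ) := by
      rw [hr]
      have : (1:ℝ) - (1 - 1/(2*(n:ℝ))) = 1/(2*(n:ℝ)) := by ring
      rw [this, one_div_one_div]
    rw [h2] at h1
    exact h1
  set S := Finset.Icc (-(n:ℤ)) (n:ℤ) with hS
  set L1P : ℝ := (1/(2*π)) * ∫ t in (0:ℝ)..(2*π),
      ‖∑ j ∈ S, c j * Complex.exp (Complex.I * j * t)‖ with hL1P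
  have hL1P0 : 0 ≤ L1P := by
    rw [hL1P]
    apply mul_nonneg (by positivity)
    apply intervalIntegral.integral_nonneg hπ.le
    intro t _
    exact norm_nonneg _
  set gp : ℝ → ℂ := fun φ => ∑ j ∈ S, a j * (r:ℂ)^j.natAbs * c j * Complex.exp (Complex.I * j * φ)
    with hgp
  have hgpc : Continuous gp := by
    apply continuous_finset_sum
    intro j _
    exact Continuous.mul continuous_const (Complex.continuous_exp.comp (continuous_const.mul Complex.continuous_ofReal))
  have hgpbd : ∀ φ : ℝ, ‖gp φ‖ ≤ K * g (2*(n:ℝ)) * L1P :=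
    fun φ => conv_bound hu hr0 hr1 hB c n φ
  -- main identity
  have hiden : (∫ ξ in (0:ℝ)..(2*π), (Wker n ξ : ℂ) * gp (θ - ξ))
      = (2*π:ℂ) * ∑ j ∈ S, a j * c j * Complex.exp (Complex.I * j * θ) := by
    have hexp : ∀ ξ : ℝ, (Wker n ξ : ℂ) * gp (θ - ξ)
        = ∑ j ∈ S, (a j * (r:ℂ)^j.natAbs * c j * Complex.exp (Complex.I * j * θ)) *
            ((Wker n ξ : ℂ) * Complex.exp (-(Complex.I * j * ξ))) := by
      intro ξ
      rw [hgp]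
      simp only
      rw [Finset.mul_sum]
      apply Finset.sum_congr rfl
      intro j _
      have h1 : Complex.I * j * ((θ - ξ : ℝ):ℂ)
          = Complex.I * j * θ + (-(Complex.I * j * ξ)) := by push_cast; ring
      rw [h1, Complex.exp_add]
      ring
    simp only [hexp]
    rw [intervalIntegral.integral_finset_sum]
    swap
    · intro j _
      apply Continuous.intervalIntegrable
      apply Continuous.mul continuous_const
      apply Continuous.mul
      · exact Complex.continuous_ofReal.comp (wker_cont n)
      · exact Complex.continuous_exp.comp ((continuous_const.mul Complex.continuous_ofReal).neg)
    have heach : ∀ j ∈ S, (∫ ξ in (0:ℝ)..(2*π),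
        (a j * (r:ℂ)^j.natAbs * c j * Complex.exp (Complex.I * j * θ)) *
          ((Wker n ξ : ℂ) * Complex.exp (-(Complex.I * j * ξ))))
        = (2*π:ℂ) * (a j * c j * Complex.exp (Complex.I * j * θ)) := by
      intro j hj
      rw [Finset.mem_Icc] at hj
      have hnat : j.natAbs ≤ n := by omega
      rw [intervalIntegral.integral_const_mul, wker_coeff hn j (by omega)]
      rw [mseq_low hnat]
      have hone : ((sval n ^ j.natAbs : ℝ) : ℂ) * (r:ℂ)^j.natAbs = 1 := by
        have : (sval n)^j.natAbs * r^j.natAbs = 1 := by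
          rw [← mul_pow, hsvr, one_pow]
        calc ((sval n ^ j.natAbs : ℝ) : ℂ) * (r:ℂ)^j.natAbs
            = (((sval n)^j.natAbs * r^j.natAbs : ℝ) : ℂ) := by push_cast; ring
          _ = 1 := by rw [this]; norm_num
      calc (a j * (r:ℂ)^j.natAbs * c j * Complex.exp (Complex.I * j * θ)) *
            ((2*π:ℂ) * ((sval n ^ j.natAbs : ℝ) : ℂ))
          = (2*π:ℂ) * (a j * c j * Complex.exp (Complex.I * j * θ)) *
              (((sval n ^ j.natAbs : ℝ) : ℂ) * (r:ℂ)^j.natAbs) := by ring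
        _ = (2*π:ℂ) * (a j * c j * Complex.exp (Complex.I * j * θ)) := by rw [hone, mul_one]
    rw [Finset.sum_congr rfl heach, ← Finset.mul_sum]
  -- take absolute values
  have habs : ‖∑ j ∈ S, a j * c j * Complex.exp (Complex.I * j * θ)‖
      = (1/(2*π)) * ‖∫ ξ in (0:ℝ)..(2*π), (Wker n ξ : ℂ) * gp (θ - ξ)‖ := by
    rw [hiden, norm_mul]
    have : ‖(2*π:ℂ)‖ = 2*π := by
      rw [show (2*π:ℂ) = ((2*π:ℝ):ℂ) by push_cast; ring, Complex.norm_real, Real.norm_eq_abs, abs_of_pos hπ]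
    rw [this]
    field_simp
    congr 1
    apply Finset.sum_congr rfl
    intro x _
    ring
  have hg2n0 : 0 ≤ g (2*(n:ℝ)) := le_of_lt (hgpos _ (by linarith))
  have hgpsh : Continuous fun ξ : ℝ => gp (θ - ξ) :=
    hgpc.comp (continuous_const.sub continuous_id)
  have hwc : Continuous fun ξ : ℝ => (Wker n ξ : ℂ) :=
    Complex.continuous_ofReal.comp (wker_cont n)
  have hbound2 : ‖∫ ξ in (0:ℝ)..(2*π), (Wker n ξ : ℂ) * gp (θ - ξ)‖
      ≤ (K * g (2*(n:ℝ)) * L1P) * (12 * (2*π)) := by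
    calc ‖∫ ξ in (0:ℝ)..(2*π), (Wker n ξ : ℂ) * gp (θ - ξ)‖
        ≤ ∫ ξ in (0:ℝ)..(2*π), ‖(Wker n ξ : ℂ) * gp (θ - ξ)‖ :=
          intervalIntegral.norm_integral_le_integral_norm hπ.le
      _ ≤ ∫ ξ in (0:ℝ)..(2*π), |Wker n ξ| * (K * g (2*(n:ℝ)) * L1P) := by
          apply intervalIntegral.integral_mono_on hπ.le
          · exact (hwc.mul hgpsh).norm.intervalIntegrable _ _
          · exact ((wker_cont n).abs.mul continuous_const).intervalIntegrable _ _
          · intro ξ _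
            rw [norm_mul, Complex.norm_real, Real.norm_eq_abs]
            exact mul_le_mul_of_nonneg_left (hgpbd (θ - ξ)) (abs_nonneg _)
      _ = (K * g (2*(n:ℝ)) * L1P) * ∫ ξ in (0:ℝ)..(2*π), |Wker n ξ| := by
          rw [intervalIntegral.integral_mul_const]
          ring
      _ ≤ (K * g (2*(n:ℝ)) * L1P) * (12 * (2*π)) := by
          apply mul_le_mul_of_nonneg_left (wker_l1 hn)
          positivity
  have hdbl : g (2*(n:ℝ)) ≤ D * g (n:ℝ) := hgdbl (n:ℝ) hn'
  calc ‖∑ j ∈ S, a j * c j * Complex.exp (Complex.I * j * θ)‖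
      ≤ (1/(2*π)) * ((K * g (2*(n:ℝ)) * L1P) * (12 * (2*π))) := by
        rw [habs]
        exact mul_le_mul_of_nonneg_left hbound2 (by positivity)
    _ = 12 * K * L1P * g (2*(n:ℝ)) := by field_simp
    _ ≤ 12 * K * L1P * (D * g (n:ℝ)) := by
        apply mul_le_mul_of_nonneg_left hdbl
        positivity
    _ = 12 * (K * D) * L1P * g (n:ℝ) := by ring
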